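/- Let n, k be positive integers with n ≥ k+2 and let S ⊆ {1,…,n} ∖ {1,…,k+2}. For i = 2,…,k+2, let x_i ∈ {0,1}^n set variable i to true and set every variable in ({1,…,n} ∖ S) ∖ {i} to false, and suppose x_2,…,x_{k+2} all agree on the variables of S. Let φ = T_1 ∨ ⋯ ∨ T_k be a DNF formula with k terms that is satisfied by each of x_2,…,x_{k+2}. Then some term T_j of φ contains no positive literal of a variable outside of S. -/

import Mathlib

/-- An assignment satisfies a term (conjunction of literals) iff every literal is true. -/
def SatTerm {n : ℕ} (T : Finset (Fin n × Bool)) (x : Fin n → Bool) : Prop :=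
  ∀ l ∈ T, x l.1 = l.2

/-- An assignment satisfies a DNF formula (a list of terms) iff it satisfies some term. -/
def SatDNF {n : ℕ} (φ : List (Finset (Fin n × Bool))) (x : Fin n → Bool) : Prop :=
  ∃ T ∈ φ, SatTerm T x

/-- Variables and samples are 0-indexed: the samples `x_2, …, x_{k+2}` of the
natural-language statement are `x 1, …, x (k+1)` here, and sample `x i` sets
variable `⟨i⟩ : Fin n` to true. -/
theorem stmt_16 (n k : ℕ) (hk : 1 ≤ k) (hn : k + 2 ≤ n)
    (S : Finset (Fin n)) (hS : ∀ v ∈ S, k + 2 ≤ (v : ℕ))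
    (x : ℕ → Fin n → Bool)
    (hx : ∀ i, 1 ≤ i → ∀ hi : i ≤ k + 1,
      x i ⟨i, by omega⟩ = true ∧
      ∀ v : Fin n, v ∉ S → (v : ℕ) ≠ i → x i v = false)
    (hagree : ∀ i j, 1 ≤ i → i ≤ k + 1 → 1 ≤ j → j ≤ k + 1 → ∀ v ∈ S, x i v = x j v)
    (φ : List (Finset (Fin n × Bool))) (hlen : φ.length = k)
    (hsat : ∀ i, 1 ≤ i → i ≤ k + 1 → SatDNF φ (x i)) :
    ∃ T ∈ φ, ∀ l ∈ T, l.2 = true → l.1 ∈ S := by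
  classical
  have hch : ∀ i, ∃ T, 1 ≤ i → i ≤ k + 1 → T ∈ φ ∧ SatTerm T (x i) := by
    intro i
    by_cases h : 1 ≤ i ∧ i ≤ k + 1
    · obtain ⟨T, hT, hs⟩ := hsat i h.1 h.2
      exact ⟨T, fun _ _ => ⟨hT, hs⟩⟩
    · exact ⟨∅, fun h1 h2 => absurd ⟨h1, h2⟩ h⟩
  choose f hf using hch
  have hcard : φ.toFinset.card < (Finset.Icc 1 (k + 1)).card := by
    have h1 : φ.toFinset.card ≤ φ.length := φ.toFinset_card_le
    rw [Nat.card_Icc]; omega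
  obtain ⟨i, hi, j, hj, hij, heq⟩ :=
    Finset.exists_ne_map_eq_of_card_lt_of_maps_to hcard (f := f)
      (fun i hi => by
        simp only [Finset.coe_Icc, Set.mem_Icc] at hi
        exact List.mem_toFinset.2 (hf i hi.1 hi.2).1)
  simp only [Finset.mem_Icc] at hi hj
  refine ⟨f i, (hf i hi.1 hi.2).1, ?_⟩
  intro l hl hpos
  by_contra hvS
  have hxi := (hx i hi.1 hi.2).2 l.1 hvS
  have hxj := (hx j hj.1 hj.2).2 l.1 hvS
  have hsi : x i l.1 = true := by rw [(hf i hi.1 hi.2).2 l hl, hpos]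
  have hsj : x j l.1 = true := by rw [(hf j hj.1 hj.2).2 l (heq ▸ hl), hpos]
  by_cases h1 : (l.1 : ℕ) = i
  · have h2 : (l.1 : ℕ) ≠ j := by omega
    rw [hxj h2] at hsj; exact absurd hsj (by simp)
  · rw [hxi h1] at hsi; exact absurd hsi (by simp)
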